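/- Let k be a positive integer, let α > 0 be a real number, and let G be a finite simple graph with maximum average degree mad(G) < k and maximum degree Δ(G) ≥ ((3α+1)/(2α))·k − 2. Then G admits an incidence (Δ(G) + ⌊(1+α)k⌋ − 1, ⌊(1+α)k⌋ − 1)-coloring. -/

import Mathlib

open SimpleGraph

/-- An incidence coloring of `G` with `n` colors, where `φ v u` is the color of the
incidence `(v, vu)` (meaningful when `G.Adj v u`): two distinct adjacent incidences
`(v, vu)` and `(w, wx)` receive distinct colors. Incidences `(v, e)` and `(w, f)` are
adjacent if `v = w`, or `e = f`, or the edge `vw` equals `e` or `f`. -/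
def IsIncidenceColoring {V : Type*} (G : SimpleGraph V) {n : ℕ} (φ : V → V → Fin n) : Prop :=
  ∀ ⦃v u w x : V⦄, G.Adj v u → G.Adj w x → (v, u) ≠ (w, x) →
    (v = w ∨ s(v, u) = s(w, x) ∨ s(v, w) = s(v, u) ∨ s(v, w) = s(w, x)) →
    φ v u ≠ φ w x

/-- `G` admits an incidence `(n, ℓ)`-coloring: an incidence coloring with `n` colors such
that for every vertex `v`, at most `ℓ` distinct colors appear on the incidences of the
form `(u, uv)` where `u` ranges over the neighbors of `v`. -/
def HasIncidenceColoring {V : Type*} (G : SimpleGraph V) (n ℓ : ℕ) : Prop :=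
  ∃ φ : V → V → Fin n, IsIncidenceColoring G φ ∧
    ∀ v : V, ({c : Fin n | ∃ u : V, G.Adj u v ∧ φ u v = c}).ncard ≤ ℓ

/-- The incidence chromatic number: the least `n` such that `G` admits an incidence
`n`-coloring. -/
noncomputable def incChromaticNumber {V : Type*} (G : SimpleGraph V) : ℕ :=
  sInf {n : ℕ | ∃ φ : V → V → Fin n, IsIncidenceColoring G φ}

/-- `mad(G) < q`: every nonempty subgraph `H` of `G` satisfies `2|E(H)| < q·|V(H)|`. -/
def MadLT {V : Type*} (G : SimpleGraph V) (q : ℝ) : Prop :=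
  ∀ H : G.Subgraph, H.verts.Nonempty →
    (2 * H.edgeSet.ncard : ℝ) < q * H.verts.ncard


set_option linter.unusedSectionVars false
set_option maxHeartbeats 16000000

namespace IncAux

variable {V : Type*} [Fintype V] [DecidableEq V]

/-- colors incoming at `v`. -/
def Palette (H : SimpleGraph V) [DecidableRel H.Adj] {n : ℕ} (φ : V → V → Fin n) (v : V) :
    Finset (Fin n) :=
  (H.neighborFinset v).image (fun u => φ u v)

lemma mem_palette {H : SimpleGraph V} [DecidableRel H.Adj] {n : ℕ} {φ : V → V → Fin n}
    {v u : V} (h : H.Adj u v) : φ u v ∈ Palette H φ v := by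
  refine Finset.mem_image.2 ⟨u, ?_, rfl⟩
  exact (H.mem_neighborFinset v u).2 h.symm

section derived
variable {H : SimpleGraph V} {n : ℕ} {φ : V → V → Fin n}
  (hc : IsIncidenceColoring H φ)

include hc

lemma col_out_inj {v a b : V} (h1 : H.Adj v a) (h2 : H.Adj v b) (hab : a ≠ b) :
    φ v a ≠ φ v b :=
  hc h1 h2 (by simp [hab]) (Or.inl rfl)

lemma col_out_out {v u x : V} (h1 : H.Adj v u) (h2 : H.Adj u x) : φ v u ≠ φ u x :=
  hc h1 h2 (by simp [h1.ne]) (Or.inr (Or.inr (Or.inl rfl)))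

lemma col_out_in {v u w : V} (h1 : H.Adj v u) (h2 : H.Adj w v) : φ v u ≠ φ w v := by
  refine hc h1 h2 ?_ (Or.inr (Or.inr (Or.inr (Sym2.eq_swap))))
  intro h
  rw [Prod.mk.injEq] at h
  exact h1.ne h.2.symm

end derived

/-- The extension step: if `z` is a reducible vertex of `H` and `H'` (= `H` minus the edges
at `z`) has a good coloring, then so does `H`. -/
lemma extend (H : SimpleGraph V) [DecidableRel H.Adj] {n ℓ Δ : ℕ} (hn : n = Δ + ℓ)
    (hΔ : ∀ v, H.degree v ≤ Δ)
    (z : V) (hz1 : 0 < H.degree z) (hzℓ : H.degree z ≤ ℓ)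
    (hzred : H.degree z +
      ((H.neighborFinset z).filter (fun u => Δ + 1 ≤ H.degree u + H.degree z)).card ≤ ℓ + 1)
    (H' : SimpleGraph V) [DecidableRel H'.Adj]
    (hH' : ∀ a b : V, H'.Adj a b ↔ H.Adj a b ∧ a ≠ z ∧ b ≠ z)
    (φ : V → V → Fin n) (hφ : IsIncidenceColoring H' φ)
    (hpal : ∀ v, (Palette H' φ v).card ≤ ℓ) :
    ∃ ψ : V → V → Fin n, IsIncidenceColoring H ψ ∧ ∀ v, (Palette H ψ v).card ≤ ℓ := by
  classical
  set d := H.degree z with hd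
  set nbrs := H.neighborFinset z with hnbrs
  have hnbrs_card : nbrs.card = d := rfl
  have hmem_nbrs : ∀ {u}, u ∈ nbrs → H.Adj z u := fun h => (H.mem_neighborFinset z _).1 h
  have hne_z : ∀ {u}, u ∈ nbrs → u ≠ z := fun h => (hmem_nbrs h).ne'
  have hnb_of_adj : ∀ {u}, H.Adj z u → u ∈ nbrs := fun h => (H.mem_neighborFinset z _).2 h
  have hn1 : 0 < n := by omega
  obtain ⟨c0⟩ : Nonempty (Fin n) := ⟨⟨0, hn1⟩⟩
  have hH'of : ∀ {a b}, H.Adj a b → a ≠ z → b ≠ z → H'.Adj a b :=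
    fun h ha hb => (hH' _ _).2 ⟨h, ha, hb⟩
  -- outgoing and incoming color sets in H', packaged opaquely
  obtain ⟨Out, In, hOut_mem, hIn_mem, hOutCard, hInCard, hOI⟩ :
      ∃ Out In : V → Finset (Fin n),
        (∀ u x : V, H'.Adj u x → φ u x ∈ Out u) ∧
        (∀ w u : V, H'.Adj w u → φ w u ∈ In u) ∧
        (∀ u ∈ nbrs, (Out u).card + 1 = H.degree u) ∧
        (∀ u, (In u).card ≤ ℓ) ∧
        (∀ u, Disjoint (Out u) (In u)) := by
    refine ⟨fun u => (H'.neighborFinset u).image (fun x => φ u x),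
            fun u => Palette H' φ u, ?_, ?_, ?_, hpal, ?_⟩
    · intro u x h
      exact Finset.mem_image.2 ⟨x, (H'.mem_neighborFinset u x).2 h, rfl⟩
    · intro w u h
      exact mem_palette h
    · intro u hu
      have huz : u ≠ z := hne_z hu
      have hcard : ((H'.neighborFinset u).image (fun x => φ u x)).card = H'.degree u := by
        rw [SimpleGraph.degree]
        refine Finset.card_image_of_injOn ?_
        intro a ha b hb hab
        by_contra hne
        exact col_out_inj hφ ((H'.mem_neighborFinset u a).1 ha)
          ((H'.mem_neighborFinset u b).1 hb) hne hab
      rw [hcard]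
      -- H'.degree u + 1 = H.degree u
      have hfe : H'.neighborFinset u = (H.neighborFinset u).erase z := by
        ext w
        simp only [SimpleGraph.mem_neighborFinset, Finset.mem_erase, hH']
        constructor
        · rintro ⟨h1, _, h3⟩; exact ⟨h3, h1⟩
        · rintro ⟨h3, h1⟩; exact ⟨h1, huz, h3⟩
      have hz_mem : z ∈ H.neighborFinset u := (H.mem_neighborFinset u z).2 (hmem_nbrs hu).symm
      have h1 : (H.neighborFinset u).card ≠ 0 := Finset.card_ne_zero_of_mem hz_mem
      rw [SimpleGraph.degree, SimpleGraph.degree, hfe, Finset.card_erase_of_mem hz_mem]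
      omega
    · intro u
      rw [Finset.disjoint_left]
      intro c hcO hcI
      obtain ⟨x, hx, rfl⟩ := Finset.mem_image.1 hcO
      obtain ⟨w, hw, hwc⟩ := Finset.mem_image.1 hcI
      exact col_out_in hφ ((H'.mem_neighborFinset u x).1 hx)
        (((H'.mem_neighborFinset u w).1 hw).symm) hwc.symm
  -- the complement sets
  obtain ⟨comp, hcomp_mem, hck⟩ :
      ∃ comp : V → Finset (Fin n),
        (∀ u c, c ∈ comp u ↔ c ∉ Out u ∧ c ∉ In u) ∧
        (∀ u ∈ nbrs, Δ + 1 ≤ (comp u).card + H.degree u) := by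
    refine ⟨fun u => Finset.univ \ (Out u ∪ In u), ?_, ?_⟩
    · intro u c
      simp only [Finset.mem_sdiff, Finset.mem_union, Finset.mem_univ, true_and]
      tauto
    · intro u hu
      beta_reduce
      have h1 : (Finset.univ \ (Out u ∪ In u)).card + (Out u ∪ In u).card = n := by
        rw [Finset.card_sdiff_of_subset (Finset.subset_univ _)]
        have := Finset.card_le_univ (Out u ∪ In u)
        simp only [Finset.card_univ, Fintype.card_fin] at *
        omega
      have h2 : (Out u ∪ In u).card ≤ (Out u).card + (In u).card := Finset.card_union_le _ _
      have h3 := hOutCard u hu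
      have h5 := hInCard u
      omega
  have hc1 : ∀ u ∈ nbrs, 1 ≤ (comp u).card := by
    intro u hu
    have := hck u hu
    have := hΔ u
    omega
  -- trouble set
  set T := nbrs.filter (fun u => (comp u).card ≤ d) with hT_def
  have hT_sub : T ⊆ nbrs := Finset.filter_subset _ _
  have ht : T.card + d ≤ ℓ + 1 := by
    have hsub : T ⊆ nbrs.filter (fun u => Δ + 1 ≤ H.degree u + d) := by
      intro u hu
      rw [hT_def, Finset.mem_filter] at hu
      rw [Finset.mem_filter]
      refine ⟨hu.1, ?_⟩
      have := hck u hu.1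
      omega
    have := Finset.card_le_card hsub
    omega
  -- colors chosen in comp u, for trouble vertices
  obtain ⟨cfun, hcfun⟩ : ∃ g : V → Fin n, ∀ u ∈ nbrs, g u ∈ comp u := by
    refine ⟨fun u => if h : (comp u).Nonempty then h.choose else c0, ?_⟩
    intro u hu
    beta_reduce
    have hne : (comp u).Nonempty := Finset.card_pos.1 (hc1 u hu)
    rw [dif_pos hne]
    exact hne.choose_spec
  set Atr := T.image cfun with hAtr_def
  have hAtrT : Atr.card ≤ T.card := Finset.card_image_le
  -- allowed sets for the outgoing colors at z
  set S : V → Finset (Fin n) := fun u =>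
    if (In u).card = ℓ then In u \ Atr else Finset.univ \ (Out u ∪ Atr) with hS_def
  have hS_full : ∀ u, (In u).card = ℓ → S u = In u \ Atr := by
    intro u h
    rw [hS_def]
    exact if_pos h
  have hS_nonfull : ∀ u, (In u).card ≠ ℓ → S u = Finset.univ \ (Out u ∪ Atr) := by
    intro u h
    rw [hS_def]
    exact if_neg h
  have hS_nonfull_card : ∀ u ∈ nbrs, (In u).card ≠ ℓ → ℓ + 1 ≤ (S u).card + T.card := by
    intro u hu hnf
    have h1 : (S u).card + (Out u ∪ Atr).card = n := by
      rw [hS_nonfull u hnf, Finset.card_sdiff_of_subset (Finset.subset_univ _)]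
      have := Finset.card_le_univ (Out u ∪ Atr)
      simp only [Finset.card_univ, Fintype.card_fin] at *
      omega
    have h2 : (Out u ∪ Atr).card ≤ (Out u).card + Atr.card := Finset.card_union_le _ _
    have h3 := hOutCard u hu
    have h5 := hΔ u
    omega
  -- Hall condition
  have hall : ∀ U : Finset {x // x ∈ nbrs}, U.card ≤ (U.biUnion (fun i => S i.1)).card := by
    intro U
    rcases U.eq_empty_or_nonempty with rfl | ⟨i₀, hi₀⟩
    · simp
    have hUcard : U.card ≤ d := by
      have := Finset.card_le_univ U
      rwa [Fintype.card_coe, hnbrs_card] at this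
    by_cases hex : ∃ i ∈ U, (In i.1).card ≠ ℓ
    · obtain ⟨i, hiU, hi⟩ := hex
      have hSi := hS_nonfull_card i.1 i.2 hi
      have h20 : (S i.1).card ≤ (U.biUnion (fun i => S i.1)).card :=
        Finset.card_le_card (Finset.subset_biUnion_of_mem (fun i => S i.1) hiU)
      omega
    · push_neg at hex
      have hSfull : ∀ i ∈ U, S i.1 = In i.1 \ Atr := fun i hi => hS_full i.1 (hex i hi)
      by_cases hsmall : U.card + T.card ≤ ℓ
      · have h5 : ℓ ≤ (In i₀.1 \ Atr).card + T.card := by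
          have h6 := Finset.le_card_sdiff Atr (In i₀.1)
          have h7 := hex i₀ hi₀
          omega
        have h20 : (S i₀.1).card ≤ (U.biUnion (fun i => S i.1)).card :=
          Finset.card_le_card (Finset.subset_biUnion_of_mem (fun i => S i.1) hi₀)
        rw [hSfull i₀ hi₀] at h20
        omega
      · push_neg at hsmall
        have hUd : U.card = d := by omega
        have hUuniv : U = Finset.univ := by
          apply Finset.eq_univ_of_card
          rw [hUd, Fintype.card_coe]
          exact hnbrs_card.symm
        have ht1 : 1 ≤ T.card := by omega
        by_cases heq : ∀ i ∈ U, ∀ j ∈ U, In i.1 = In j.1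
        · -- all palettes equal: Atr misses them entirely
          have hdisjA : ∀ a ∈ Atr, a ∉ In i₀.1 := by
            intro a ha
            rw [hAtr_def] at ha
            obtain ⟨uT, huT, rfl⟩ := Finset.mem_image.1 ha
            have huT_nbrs : uT ∈ nbrs := hT_sub huT
            have hcm := hcfun uT huT_nbrs
            have hmem' : (⟨uT, huT_nbrs⟩ : {x // x ∈ nbrs}) ∈ U := by
              rw [hUuniv]; exact Finset.mem_univ _
            have hEq : In uT = In i₀.1 := heq ⟨uT, huT_nbrs⟩ hmem' i₀ hi₀
            rw [← hEq]
            exact ((hcomp_mem uT _).1 hcm).2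
          have hSeq : In i₀.1 \ Atr = In i₀.1 := by
            apply Finset.sdiff_eq_self_of_disjoint
            rw [Finset.disjoint_right]
            intro a ha
            exact hdisjA a ha
          have hcc : (S i₀.1).card ≤ (U.biUnion (fun i => S i.1)).card :=
            Finset.card_le_card (Finset.subset_biUnion_of_mem (fun i => S i.1) hi₀)
          rw [hSfull i₀ hi₀, hSeq] at hcc
          have := hex i₀ hi₀
          omega
        · push_neg at heq
          obtain ⟨i, hi, j, hj, hij⟩ := heq
          have hcup : ℓ + 1 ≤ (In i.1 ∪ In j.1).card := by
            by_contra hlt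
            push_neg at hlt
            have h8 : In i.1 = In i.1 ∪ In j.1 := by
              apply Finset.eq_of_subset_of_card_le Finset.subset_union_left
              have := hex i hi
              omega
            have h9 : In j.1 ⊆ In i.1 := by
              rw [h8]; exact Finset.subset_union_right
            have h10 : In j.1 = In i.1 := by
              apply Finset.eq_of_subset_of_card_le h9
              rw [hex i hi, hex j hj]
            exact hij h10.symm
          have h11 : (In i.1 ∪ In j.1) \ Atr ⊆ U.biUnion (fun i => S i.1) := by
            rw [Finset.union_sdiff_distrib]
            apply Finset.union_subset
            · rw [← hSfull i hi]
              exact Finset.subset_biUnion_of_mem (fun i => S i.1) hi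
            · rw [← hSfull j hj]
              exact Finset.subset_biUnion_of_mem (fun i => S i.1) hj
          have h12 := Finset.card_le_card h11
          have h13 := Finset.le_card_sdiff Atr (In i.1 ∪ In j.1)
          omega
  obtain ⟨f, hfinj, hfS⟩ := (Finset.all_card_le_biUnion_card_iff_exists_injective
    (fun (i : {x // x ∈ nbrs}) => S i.1)).1 hall
  set B := Finset.univ.image f with hB_def
  have hBcard : B.card = d := by
    rw [hB_def, Finset.card_image_of_injective _ hfinj, Finset.card_univ, Fintype.card_coe]
    exact hnbrs_card
  have hfB : ∀ i, f i ∈ B := fun i => by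
    rw [hB_def]; exact Finset.mem_image.2 ⟨i, Finset.mem_univ _, rfl⟩
  have hfnotAtr : ∀ i, f i ∉ Atr := by
    intro i hi
    have hfs := hfS i
    by_cases hfull : (In i.1).card = ℓ
    · rw [hS_full i.1 hfull] at hfs; exact (Finset.mem_sdiff.1 hfs).2 hi
    · rw [hS_nonfull i.1 hfull] at hfs
      exact (Finset.mem_sdiff.1 hfs).2 (Finset.mem_union_right _ hi)
  have hfnotOut : ∀ i, f i ∉ Out i.1 := by
    intro i hi
    have hfs := hfS i
    by_cases hfull : (In i.1).card = ℓ
    · rw [hS_full i.1 hfull] at hfs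
      have : f i ∈ In i.1 := (Finset.mem_sdiff.1 hfs).1
      exact (Finset.disjoint_left.1 (hOI i.1)) hi this
    · rw [hS_nonfull i.1 hfull] at hfs
      exact (Finset.mem_sdiff.1 hfs).2 (Finset.mem_union_left _ hi)
  have hfIn : ∀ i, (In i.1).card = ℓ → f i ∈ In i.1 := by
    intro i hfull
    have hfs := hfS i
    rw [hS_full i.1 hfull] at hfs
    exact (Finset.mem_sdiff.1 hfs).1
  -- incoming colors at z
  obtain ⟨afun, hafun_comp, hafun_notB⟩ :
      ∃ afun : V → Fin n, (∀ u ∈ nbrs, afun u ∈ comp u) ∧ (∀ u ∈ nbrs, afun u ∉ B) := by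
    refine ⟨fun u =>
      if (comp u).card ≤ d then cfun u
      else (if h : ((comp u) \ B).Nonempty then h.choose else c0), ?_, ?_⟩
    · intro u hu
      beta_reduce
      by_cases htr : (comp u).card ≤ d
      · rw [if_pos htr]; exact hcfun u hu
      · rw [if_neg htr]
        have hne : ((comp u) \ B).Nonempty := by
          have h8 := Finset.le_card_sdiff B (comp u)
          rw [hBcard] at h8
          exact Finset.card_pos.1 (by omega)
        rw [dif_pos hne]
        exact (Finset.mem_sdiff.1 hne.choose_spec).1
    · intro u hu
      beta_reduce
      by_cases htr : (comp u).card ≤ d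
      · rw [if_pos htr]
        intro hmem
        rw [hB_def] at hmem
        obtain ⟨i, _, hif⟩ := Finset.mem_image.1 hmem
        have hcA : cfun u ∈ Atr := by
          rw [hAtr_def]
          exact Finset.mem_image.2 ⟨u, by rw [hT_def, Finset.mem_filter]; exact ⟨hu, htr⟩, rfl⟩
        exact hfnotAtr i (hif ▸ hcA)
      · rw [if_neg htr]
        have hne : ((comp u) \ B).Nonempty := by
          have h8 := Finset.le_card_sdiff B (comp u)
          rw [hBcard] at h8
          exact Finset.card_pos.1 (by omega)
        rw [dif_pos hne]
        exact (Finset.mem_sdiff.1 hne.choose_spec).2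
  -- the new coloring
  set ψ : V → V → Fin n := fun a b =>
    if a = z then (if hb : b ∈ nbrs then f ⟨b, hb⟩ else c0)
    else if b = z then (if ha : a ∈ nbrs then afun a else c0) else φ a b with hψ_def
  have hψ_b : ∀ (u) (hu : u ∈ nbrs), ψ z u = f ⟨u, hu⟩ := by
    intro u hu
    simp only [hψ_def, if_pos rfl, dif_pos hu]
  have hψ_a : ∀ (u), u ∈ nbrs → ψ u z = afun u := by
    intro u hu
    have huz := hne_z hu
    simp only [hψ_def, if_neg huz, eq_self_iff_true, if_true, dif_pos hu]
  have hψ_old : ∀ a b, a ≠ z → b ≠ z → ψ a b = φ a b := by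
    intro a b ha hb
    simp only [hψ_def, if_neg ha, if_neg hb]
  -- distinctness facts
  have kBB : ∀ (u₁) (h₁ : u₁ ∈ nbrs) (u₂) (h₂ : u₂ ∈ nbrs), u₁ ≠ u₂ →
      f ⟨u₁, h₁⟩ ≠ f ⟨u₂, h₂⟩ := by
    intro u₁ h₁ u₂ h₂ hne heq
    exact hne (congrArg Subtype.val (hfinj heq))
  have kAB : ∀ (u₁), u₁ ∈ nbrs → ∀ i, afun u₁ ≠ f i := by
    intro u₁ h₁ i heq
    exact hafun_notB u₁ h₁ (heq ▸ hfB i)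
  have kAout : ∀ u ∈ nbrs, ∀ x, H'.Adj u x → afun u ≠ φ u x := by
    intro u hu x hadj heq
    exact ((hcomp_mem u _).1 (hafun_comp u hu)).1 (heq ▸ hOut_mem u x hadj)
  have kAin : ∀ u ∈ nbrs, ∀ w, H'.Adj w u → afun u ≠ φ w u := by
    intro u hu w hadj heq
    exact ((hcomp_mem u _).1 (hafun_comp u hu)).2 (heq ▸ hIn_mem w u hadj)
  have kBout : ∀ (u) (hu : u ∈ nbrs) (x), H'.Adj u x → f ⟨u, hu⟩ ≠ φ u x := by
    intro u hu x hadj heq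
    exact hfnotOut ⟨u, hu⟩ (heq ▸ hOut_mem u x hadj)
  refine ⟨ψ, ?_, ?_⟩
  · -- the incidence coloring property
    intro v u w x hvu hwx hne hdisj
    by_cases hv : v = z
    · subst v
      have hu_nb : u ∈ nbrs := hnb_of_adj hvu
      have huz : u ≠ z := hne_z hu_nb
      by_cases hw : w = z
      · subst w
        have hx_nb : x ∈ nbrs := hnb_of_adj hwx
        rw [hψ_b u hu_nb, hψ_b x hx_nb]
        exact kBB u hu_nb x hx_nb (fun h => hne (by rw [h]))
      · by_cases hx : x = z
        · subst x
          have hw_nb : w ∈ nbrs := hnb_of_adj hwx.symm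
          rw [hψ_b u hu_nb, hψ_a w hw_nb]
          exact (kAB w hw_nb ⟨u, hu_nb⟩).symm
        · rw [hψ_b u hu_nb, hψ_old w x hw hx]
          rcases hdisj with h | h | h | h
          · exact absurd h.symm hw
          · rw [Sym2.eq_iff] at h
            rcases h with ⟨h1, _⟩ | ⟨h1, _⟩
            · exact absurd h1.symm hw
            · exact absurd h1.symm hx
          · rw [Sym2.eq_iff] at h
            rcases h with ⟨_, h2⟩ | ⟨h1, _⟩
            · subst w
              exact kBout u hu_nb x (hH'of hwx huz hx)
            · exact absurd h1.symm huz
          · rw [Sym2.eq_iff] at h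
            rcases h with ⟨h1, _⟩ | ⟨h1, _⟩
            · exact absurd h1.symm hw
            · exact absurd h1.symm hx
    · by_cases hu : u = z
      · subst u
        have hv_nb : v ∈ nbrs := hnb_of_adj hvu.symm
        by_cases hw : w = z
        · subst w
          have hx_nb : x ∈ nbrs := hnb_of_adj hwx
          rw [hψ_a v hv_nb, hψ_b x hx_nb]
          exact kAB v hv_nb ⟨x, hx_nb⟩
        · by_cases hx : x = z
          · subst x
            have hvw : v ≠ w := fun h => hne (by rw [h])
            exfalso
            rcases hdisj with h | h | h | h
            · exact hvw h
            · rw [Sym2.eq_iff] at h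
              rcases h with ⟨h1, _⟩ | ⟨h1, _⟩
              · exact hvw h1
              · exact hv h1
            · rw [Sym2.eq_iff] at h
              rcases h with ⟨_, h2⟩ | ⟨h1, _⟩
              · exact hw h2
              · exact hv h1
            · rw [Sym2.eq_iff] at h
              rcases h with ⟨h1, h2⟩ | ⟨h1, _⟩
              · exact hw h2
              · exact hv h1
          · rw [hψ_a v hv_nb, hψ_old w x hw hx]
            rcases hdisj with h | h | h | h
            · subst w
              exact kAout v hv_nb x (hH'of hwx hv hx)
            · rw [Sym2.eq_iff] at h
              rcases h with ⟨_, h2⟩ | ⟨_, h2⟩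
              · exact absurd h2.symm hx
              · exact absurd h2.symm hw
            · rw [Sym2.eq_iff] at h
              rcases h with ⟨_, h2⟩ | ⟨h1, _⟩
              · exact absurd h2 hw
              · exact absurd h1 hv
            · rw [Sym2.eq_iff] at h
              rcases h with ⟨h1, h2⟩ | ⟨h1, _⟩
              · exact absurd h2 hwx.ne
              · subst x
                exact kAin v hv_nb w (hH'of hwx hw hv)
      · by_cases hw : w = z
        · subst w
          have hx_nb : x ∈ nbrs := hnb_of_adj hwx
          rw [hψ_old v u hv hu, hψ_b x hx_nb]
          rcases hdisj with h | h | h | h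
          · exact absurd h hv
          · rw [Sym2.eq_iff] at h
            rcases h with ⟨h1, _⟩ | ⟨_, h2⟩
            · exact absurd h1 hv
            · exact absurd h2 hu
          · rw [Sym2.eq_iff] at h
            rcases h with ⟨_, h2⟩ | ⟨h1, _⟩
            · exact absurd h2.symm hu
            · exact absurd h1 hvu.ne
          · rw [Sym2.eq_iff] at h
            rcases h with ⟨h1, _⟩ | ⟨h1, _⟩
            · exact absurd h1 hv
            · subst x
              exact (kBout v hx_nb u (hH'of hvu hv hu)).symm
        · by_cases hx : x = z
          · subst x
            have hw_nb : w ∈ nbrs := hnb_of_adj hwx.symm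
            rw [hψ_old v u hv hu, hψ_a w hw_nb]
            rcases hdisj with h | h | h | h
            · subst w
              exact (kAout v hw_nb u (hH'of hvu hv hu)).symm
            · rw [Sym2.eq_iff] at h
              rcases h with ⟨_, h2⟩ | ⟨h1, _⟩
              · exact absurd h2 hu
              · exact absurd h1 hv
            · rw [Sym2.eq_iff] at h
              rcases h with ⟨_, h2⟩ | ⟨h1, _⟩
              · subst w
                exact (kAin u hw_nb v (hH'of hvu hv hu)).symm
              · exact absurd h1 hvu.ne
            · rw [Sym2.eq_iff] at h
              rcases h with ⟨_, h2⟩ | ⟨h1, _⟩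
              · exact absurd h2 hw
              · exact absurd h1 hv
          · rw [hψ_old v u hv hu, hψ_old w x hw hx]
            exact hφ (hH'of hvu hv hu) (hH'of hwx hw hx) hne hdisj
  · -- palette bound
    intro v
    by_cases hvz : v = z
    · subst v
      have hsub : Palette H ψ z ⊆ nbrs.image afun := by
        intro c hc
        obtain ⟨u, hu, rfl⟩ := Finset.mem_image.1 hc
        rw [hψ_a u hu]
        exact Finset.mem_image_of_mem _ hu
      calc (Palette H ψ z).card ≤ (nbrs.image afun).card := Finset.card_le_card hsub
        _ ≤ nbrs.card := Finset.card_image_le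
        _ ≤ ℓ := by rw [hnbrs_card]; exact hzℓ
    · by_cases hv_nb : v ∈ nbrs
      · have hsub : Palette H ψ v ⊆ insert (f ⟨v, hv_nb⟩) (In v) := by
          intro c hc
          obtain ⟨u, hu, rfl⟩ := Finset.mem_image.1 hc
          have hadj : H.Adj v u := (H.mem_neighborFinset v u).1 hu
          by_cases huz : u = z
          · subst u
            rw [hψ_b v hv_nb]
            exact Finset.mem_insert_self _ _
          · rw [hψ_old u v huz hvz]
            exact Finset.mem_insert_of_mem (hIn_mem u v (hH'of hadj.symm huz hvz))
        by_cases hfull : (In v).card = ℓ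
        · have hins : insert (f ⟨v, hv_nb⟩) (In v) = In v :=
            Finset.insert_eq_self.2 (hfIn ⟨v, hv_nb⟩ hfull)
          rw [hins] at hsub
          calc (Palette H ψ v).card ≤ (In v).card := Finset.card_le_card hsub
            _ ≤ ℓ := hInCard v
        · have h1 := hInCard v
          calc (Palette H ψ v).card ≤ (insert (f ⟨v, hv_nb⟩) (In v)).card :=
              Finset.card_le_card hsub
            _ ≤ (In v).card + 1 := Finset.card_insert_le _ _
            _ ≤ ℓ := by omega
      · have hsub : Palette H ψ v ⊆ In v := by
          intro c hc
          obtain ⟨u, hu, rfl⟩ := Finset.mem_image.1 hc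
          have hadj : H.Adj v u := (H.mem_neighborFinset v u).1 hu
          have huz : u ≠ z := by
            intro h
            subst u
            exact hv_nb (hnb_of_adj hadj.symm)
          rw [hψ_old u v huz hvz]
          exact hIn_mem u v (hH'of hadj.symm huz hvz)
        exact le_trans (Finset.card_le_card hsub) (hInCard v)


/-- Discharging: in a nonempty graph whose support has average degree `< k`,
with the degree/floor hypotheses, there is a reducible vertex. -/
lemma exists_reducible (H : SimpleGraph V) [DecidableRel H.Adj] (k Δ ℓ : ℕ)
    (α : ℝ) (hα : 0 < α)
    (hk1 : 1 ≤ k) (hlk : k ≤ ℓ + 1)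
    (hτα : α * (k : ℝ) < (ℓ : ℝ) + 2 - (k : ℝ))
    (hΔα : ((3 * α + 1) / (2 * α)) * (k : ℝ) - 2 ≤ (Δ : ℝ))
    (hdeg : ∀ v, H.degree v ≤ Δ)
    (hsum : (∑ v : V, (H.degree v : ℝ)) <
      (k : ℝ) * ((Finset.univ.filter (fun v => 0 < H.degree v)).card : ℝ)) :
    ∃ z, 0 < H.degree z ∧ H.degree z ≤ ℓ ∧ H.degree z +
      ((H.neighborFinset z).filter (fun u => Δ + 1 ≤ H.degree u + H.degree z)).card ≤ ℓ + 1 := by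
  classical
  by_contra hcon
  push_neg at hcon
  set tv : V → ℕ :=
    fun v => ((H.neighborFinset v).filter (fun u => Δ + 1 ≤ H.degree u + H.degree v)).card
    with htv_def
  set supp := Finset.univ.filter (fun v => 0 < H.degree v) with hsupp_def
  have hmem_supp : ∀ v, v ∈ supp ↔ 0 < H.degree v := by
    intro v
    rw [hsupp_def, Finset.mem_filter]
    simp
  have hadj_supp : ∀ {u v : V}, H.Adj u v → 0 < H.degree v := by
    intro u v h
    have : u ∈ H.neighborFinset v := (H.mem_neighborFinset v u).2 h.symm
    exact Finset.card_pos.2 ⟨u, this⟩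
  have htv_le : ∀ v, tv v ≤ H.degree v := by
    intro v
    rw [htv_def]
    exact Finset.card_le_card (Finset.filter_subset _ _)
  set m₀ : ℕ := (ℓ + 3) / 2 with hm₀_def
  have hdich : ∀ v, 0 < H.degree v →
      k ≤ H.degree v ∨ (m₀ ≤ H.degree v ∧ ℓ + 2 ≤ H.degree v + tv v) := by
    intro v hv
    have htv_eq : tv v =
        ((H.neighborFinset v).filter (fun u => Δ + 1 ≤ H.degree u + H.degree v)).card := rfl
    by_cases h : H.degree v ≤ ℓ
    · have h2 := hcon v hv h
      have h3 := htv_le v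
      right
      constructor
      · omega
      · omega
    · left; omega
  -- basic real facts
  have hk0 : (0:ℝ) < (k:ℝ) := by exact_mod_cast hk1
  have hτ1 : (1:ℝ) ≤ (ℓ:ℝ) + 2 - k := by
    have : (k:ℝ) ≤ (ℓ:ℝ) + 1 := by exact_mod_cast hlk
    linarith
  have hA6 : 3 * (k:ℝ) * ((ℓ:ℝ) + 2 - k) + (k:ℝ)^2 ≤
      2 * ((ℓ:ℝ) + 2 - k) * ((Δ:ℝ) + 2) := by
    have hG : (3 * α + 1) * (k:ℝ) ≤ 2 * α * ((Δ:ℝ) + 2) := by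
      have h1 : ((3 * α + 1) / (2 * α)) * (k : ℝ) ≤ (Δ:ℝ) + 2 := by linarith
      have h2 := mul_le_mul_of_nonneg_left h1 (le_of_lt (by linarith : (0:ℝ) < 2 * α))
      calc (3 * α + 1) * (k:ℝ) = 2 * α * (((3 * α + 1) / (2 * α)) * (k : ℝ)) := by
            field_simp
        _ ≤ 2 * α * ((Δ:ℝ) + 2) := h2
    set τ : ℝ := (ℓ:ℝ) + 2 - k with hτ_def
    have hτpos : 0 < τ := by linarith
    have e1 : τ * ((3 * α + 1) * (k:ℝ)) ≤ τ * (2 * α * ((Δ:ℝ) + 2)) :=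
      mul_le_mul_of_nonneg_left hG (le_of_lt hτpos)
    have e2 : α * (k:ℝ)^2 < τ * (k:ℝ) := by
      have := mul_lt_mul_of_pos_right hτα hk0
      nlinarith
    have e5 : α * (3 * (k:ℝ) * τ + (k:ℝ)^2) < α * (2 * τ * ((Δ:ℝ) + 2)) := by nlinarith
    nlinarith
  -- the payment function
  set pay : V → V → ℝ := fun u v =>
    if H.Adj u v ∧ Δ + 1 ≤ H.degree u + H.degree v ∧ H.degree v + 1 ≤ k then
      ((k:ℝ) - H.degree v) / ((ℓ:ℝ) + 2 - H.degree v) else 0 with hpay_def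
  have hpay_eq : ∀ u v, (H.Adj u v ∧ Δ + 1 ≤ H.degree u + H.degree v ∧ H.degree v + 1 ≤ k) →
      pay u v = ((k:ℝ) - H.degree v) / ((ℓ:ℝ) + 2 - H.degree v) := by
    intro u v h
    rw [hpay_def]
    beta_reduce
    rw [if_pos h]
  have hpay_zero : ∀ u v, ¬(H.Adj u v ∧ Δ + 1 ≤ H.degree u + H.degree v ∧ H.degree v + 1 ≤ k) →
      pay u v = 0 := by
    intro u v h
    rw [hpay_def]
    beta_reduce
    rw [if_neg h]
  have hpay_nonneg : ∀ u v, 0 ≤ pay u v := by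
    intro u v
    by_cases h : H.Adj u v ∧ Δ + 1 ≤ H.degree u + H.degree v ∧ H.degree v + 1 ≤ k
    · rw [hpay_eq u v h]
      have h1 : (H.degree v : ℝ) ≤ (k:ℝ) - 1 := by
        have := h.2.2
        have : (H.degree v : ℝ) + 1 ≤ (k:ℝ) := by exact_mod_cast this
        linarith
      apply div_nonneg <;> linarith
    · rw [hpay_zero u v h]
  have hpay_adj : ∀ u v, ¬ H.Adj u v → pay u v = 0 := by
    intro u v h
    exact hpay_zero u v (fun hc => h hc.1)
  -- monotonicity of the weight function
  have mono : ∀ x y : ℝ, x ≤ y → y ≤ (k:ℝ) - 1 →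
      ((k:ℝ) - y) / ((ℓ:ℝ) + 2 - y) ≤ ((k:ℝ) - x) / ((ℓ:ℝ) + 2 - x) := by
    intro x y hxy hyk
    have hdy : (0:ℝ) < (ℓ:ℝ) + 2 - y := by linarith
    have hdx : (0:ℝ) < (ℓ:ℝ) + 2 - x := by linarith
    rw [div_le_div_iff₀ hdy hdx]
    nlinarith
  -- the per-vertex inequality
  have hfinal : ∀ v ∈ supp,
      (0:ℝ) ≤ ((H.degree v : ℝ) - k + (∑ u : V, pay u v)) - (∑ u : V, pay v u) := by
    intro v hv
    have hv1 : 0 < H.degree v := (hmem_supp v).1 hv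
    by_cases hrecv : H.degree v + 1 ≤ k
    · -- receiver
      obtain ⟨hm₀v, htv⟩ := (hdich v hv1).resolve_left (by omega)
      have hτk2 : ℓ + 4 ≤ 2 * k := by omega
      -- Δ is large
      have hΔ2k : 2 * (k:ℝ) - 2 ≤ (Δ:ℝ) := by
        have h1 : ((ℓ:ℝ) + 2 - k) ≤ (k:ℝ) - 2 := by
          have : (ℓ:ℝ) + 4 ≤ 2 * (k:ℝ) := by exact_mod_cast hτk2
          linarith
        nlinarith [hτ1]
      -- outgoing payments vanish
      have hout : ∀ u : V, pay v u = 0 := by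
        intro u
        apply hpay_zero
        rintro ⟨hadj, hheavy, hurecv⟩
        have h1 : (Δ:ℝ) + 1 ≤ (H.degree v : ℝ) + H.degree u := by exact_mod_cast hheavy
        have h2 : (H.degree v : ℝ) + 1 ≤ k := by exact_mod_cast hrecv
        have h3 : (H.degree u : ℝ) + 1 ≤ k := by exact_mod_cast hurecv
        linarith
      have hsum_out : (∑ u : V, pay v u) = 0 := Finset.sum_eq_zero (fun u _ => hout u)
      -- incoming payments
      have hwv_nonneg : (0:ℝ) ≤ ((k:ℝ) - H.degree v) / ((ℓ:ℝ) + 2 - H.degree v) := by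
        have h2 : (H.degree v : ℝ) + 1 ≤ k := by exact_mod_cast hrecv
        apply div_nonneg <;> linarith [hτ1]
      have hin : (tv v : ℝ) * (((k:ℝ) - H.degree v) / ((ℓ:ℝ) + 2 - H.degree v)) ≤
          ∑ u : V, pay u v := by
        have hsub : (H.neighborFinset v).filter
            (fun u => Δ + 1 ≤ H.degree u + H.degree v) ⊆ Finset.univ :=
          Finset.subset_univ _
        have h4 : ∑ u ∈ (H.neighborFinset v).filter
            (fun u => Δ + 1 ≤ H.degree u + H.degree v), pay u v ≤ ∑ u : V, pay u v :=
          Finset.sum_le_sum_of_subset_of_nonneg hsub (fun u _ _ => hpay_nonneg u v)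
        have h5 : ∑ u ∈ (H.neighborFinset v).filter
            (fun u => Δ + 1 ≤ H.degree u + H.degree v), pay u v
            = (tv v : ℝ) * (((k:ℝ) - H.degree v) / ((ℓ:ℝ) + 2 - H.degree v)) := by
          rw [Finset.sum_congr rfl (fun u hu => ?_), Finset.sum_const, htv_def,
            nsmul_eq_mul]
          rw [Finset.mem_filter] at hu
          exact hpay_eq u v ⟨((H.mem_neighborFinset v u).1 hu.1).symm, hu.2, hrecv⟩
        rw [← h5]
        exact h4
      have hval : ((ℓ:ℝ) + 2 - H.degree v) *
          (((k:ℝ) - H.degree v) / ((ℓ:ℝ) + 2 - H.degree v)) = (k:ℝ) - H.degree v := by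
        have h2 : (H.degree v : ℝ) + 1 ≤ k := by exact_mod_cast hrecv
        have hd : ((ℓ:ℝ) + 2 - H.degree v) ≠ 0 := by
          have : (k:ℝ) ≤ (ℓ:ℝ) + 1 := by exact_mod_cast hlk
          intro h0; rw [sub_eq_zero] at h0; nlinarith
        field_simp
      have h6 : ((ℓ:ℝ) + 2 - H.degree v) ≤ (tv v : ℝ) := by
        have : (ℓ:ℝ) + 2 ≤ (H.degree v : ℝ) + tv v := by exact_mod_cast htv
        linarith
      have h7 : ((ℓ:ℝ) + 2 - H.degree v) *
            (((k:ℝ) - H.degree v) / ((ℓ:ℝ) + 2 - H.degree v)) ≤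
          (tv v : ℝ) * (((k:ℝ) - H.degree v) / ((ℓ:ℝ) + 2 - H.degree v)) :=
        mul_le_mul_of_nonneg_right h6 hwv_nonneg
      rw [hval] at h7
      rw [hsum_out]
      linarith [le_trans h7 hin]
    · -- sender or middle: degree ≥ k
      have hvk : k ≤ H.degree v := by omega
      have hvk' : (k:ℝ) ≤ (H.degree v : ℝ) := by exact_mod_cast hvk
      have hin0 : ∀ u : V, pay u v = 0 := by
        intro u
        apply hpay_zero
        rintro ⟨-, -, hc⟩
        omega
      have hsum_in : (∑ u : V, pay u v) = 0 := Finset.sum_eq_zero (fun u _ => hin0 u)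
      rw [hsum_in]
      by_cases hz : ∀ u : V, pay v u = 0
      · rw [Finset.sum_eq_zero (fun u _ => hz u)]
        linarith
      · push_neg at hz
        obtain ⟨u₀, hu₀⟩ := hz
        have hcond₀ : H.Adj v u₀ ∧ Δ + 1 ≤ H.degree v + H.degree u₀ ∧ H.degree u₀ + 1 ≤ k := by
          by_contra hc
          exact hu₀ (hpay_zero v u₀ hc)
        obtain ⟨hadj₀, hheavy₀, hrecv₀⟩ := hcond₀
        have hu₀supp : 0 < H.degree u₀ := hadj_supp hadj₀
        obtain ⟨hm₀u₀, -⟩ := (hdich u₀ hu₀supp).resolve_left (by omega)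
        have hτk2 : ℓ + 4 ≤ 2 * k := by omega
        -- real versions
        have hm₀ℝ : (ℓ:ℝ) + 2 ≤ 2 * (m₀:ℝ) := by
          have h8 : ℓ + 2 ≤ 2 * m₀ := by omega
          exact_mod_cast h8
        have hm₀k : (m₀:ℝ) ≤ (k:ℝ) - 1 := by
          have h8 : m₀ + 1 ≤ k := by omega
          have : (m₀:ℝ) + 1 ≤ (k:ℝ) := by exact_mod_cast h8
          linarith
        have hτk2ℝ : (ℓ:ℝ) + 2 - k ≤ (k:ℝ) - 2 := by
          have : (ℓ:ℝ) + 4 ≤ 2 * (k:ℝ) := by exact_mod_cast hτk2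
          linarith
        -- the master inequality
        have master : (k:ℝ) * ((ℓ:ℝ) + 2 - m₀) ≤ ((Δ:ℝ) + 1 - m₀) * ((ℓ:ℝ) + 2 - k) := by
          have e3 : ((k:ℝ) - ((ℓ:ℝ) + 2 - k)) * (2 * (m₀:ℝ) - ((ℓ:ℝ) + 2)) ≥ 0 :=
            mul_nonneg (by linarith) (by linarith)
          have e4 : ((ℓ:ℝ) + 2 - k) * ((k:ℝ) - 2 - ((ℓ:ℝ) + 2 - k)) ≥ 0 :=
            mul_nonneg (by linarith) (by linarith)
          nlinarith [hA6]
        -- per-term bound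
        set M : ℝ := max (m₀:ℝ) ((Δ:ℝ) + 1 - H.degree v) with hM_def
        have hMu₀ : M ≤ (H.degree u₀ : ℝ) := by
          apply max_le
          · exact_mod_cast hm₀u₀
          · have : (Δ:ℝ) + 1 ≤ (H.degree v : ℝ) + (H.degree u₀ : ℝ) := by
              exact_mod_cast hheavy₀
            linarith
        have hMk : M ≤ (k:ℝ) - 1 := by
          have h9 : (H.degree u₀ : ℝ) + 1 ≤ (k:ℝ) := by exact_mod_cast hrecv₀
          linarith [hMu₀]
        have hMd : (0:ℝ) < (ℓ:ℝ) + 2 - M := by linarith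
        have hTv_nonneg : (0:ℝ) ≤ ((k:ℝ) - M) / ((ℓ:ℝ) + 2 - M) := by
          apply div_nonneg <;> linarith
        have hterm : ∀ u : V, pay v u ≤
            (if H.Adj v u then ((k:ℝ) - M) / ((ℓ:ℝ) + 2 - M) else 0) := by
          intro u
          by_cases hc : H.Adj v u ∧ Δ + 1 ≤ H.degree v + H.degree u ∧ H.degree u + 1 ≤ k
          · rw [hpay_eq v u hc, if_pos hc.1]
            have husupp : 0 < H.degree u := hadj_supp hc.1
            obtain ⟨hm₀u, -⟩ := (hdich u husupp).resolve_left (by omega)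
            have hMu : M ≤ (H.degree u : ℝ) := by
              apply max_le
              · exact_mod_cast hm₀u
              · have : (Δ:ℝ) + 1 ≤ (H.degree v : ℝ) + (H.degree u : ℝ) := by
                  exact_mod_cast hc.2.1
                linarith
            have huk : (H.degree u : ℝ) ≤ (k:ℝ) - 1 := by
              have : (H.degree u : ℝ) + 1 ≤ (k:ℝ) := by exact_mod_cast hc.2.2
              linarith
            exact mono M (H.degree u : ℝ) hMu huk
          · rw [hpay_zero v u hc]
            by_cases ha : H.Adj v u
            · rw [if_pos ha]; exact hTv_nonneg
            · rw [if_neg ha]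
        have hsum1 : (∑ u : V, pay v u) ≤
            (H.degree v : ℝ) * (((k:ℝ) - M) / ((ℓ:ℝ) + 2 - M)) := by
          have h10 := Finset.sum_le_sum (fun u (_ : u ∈ Finset.univ) => hterm u)
          have h11 : (∑ u : V, (if H.Adj v u then ((k:ℝ) - M) / ((ℓ:ℝ) + 2 - M) else 0))
              = (H.degree v : ℝ) * (((k:ℝ) - M) / ((ℓ:ℝ) + 2 - M)) := by
            rw [← Finset.sum_filter, Finset.sum_const, nsmul_eq_mul]
            congr 1
            rw [SimpleGraph.degree, SimpleGraph.neighborFinset_eq_filter]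
          rw [h11] at h10
          exact h10
        -- finishing: degree v * T ≤ degree v − k
        have hdvΔ : (H.degree v : ℝ) ≥ (Δ:ℝ) + 2 - k := by
          have h12 : (Δ:ℝ) + 1 ≤ (H.degree v : ℝ) + (H.degree u₀ : ℝ) := by
            exact_mod_cast hheavy₀
          have h13 : (H.degree u₀ : ℝ) + 1 ≤ (k:ℝ) := by exact_mod_cast hrecv₀
          linarith
        have hfin2 : (H.degree v : ℝ) * (((k:ℝ) - M) / ((ℓ:ℝ) + 2 - M)) ≤
            (H.degree v : ℝ) - k := by
          rw [mul_div_assoc', div_le_iff₀ hMd]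
          -- (deg v) * (k − M) ≤ (deg v − k) * (ℓ + 2 − M)
          rcases le_total ((Δ:ℝ) + 1 - (H.degree v : ℝ)) (m₀:ℝ) with hcase | hcase
          · -- M = m₀
            have hMeq : M = (m₀:ℝ) := max_eq_left hcase
            rw [hMeq]
            -- deg v ⬝ τ ≥ k (ℓ+2−m₀)
            have h14 : ((Δ:ℝ) + 1 - m₀) * ((ℓ:ℝ) + 2 - k) ≤
                (H.degree v : ℝ) * ((ℓ:ℝ) + 2 - k) := by
              apply mul_le_mul_of_nonneg_right _ (by linarith)
              linarith
            nlinarith [master]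
          · -- M = Δ + 1 − deg v
            have hMeq : M = (Δ:ℝ) + 1 - (H.degree v : ℝ) := max_eq_right hcase
            rw [hMeq]
            have h15 : (H.degree v : ℝ) ≤ (Δ:ℝ) + 1 - m₀ := by linarith
            have h16 : (H.degree v : ℝ) * ((k:ℝ) - ((ℓ:ℝ) + 2 - k)) ≤
                ((Δ:ℝ) + 1 - m₀) * ((k:ℝ) - ((ℓ:ℝ) + 2 - k)) := by
              apply mul_le_mul_of_nonneg_right h15 (by linarith)
            nlinarith [master]
        linarith [le_trans hsum1 hfin2]
  -- summing up
  have hswap : (∑ v ∈ supp, (∑ u : V, pay u v)) = (∑ v ∈ supp, (∑ u : V, pay v u)) := by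
    have e1 : (∑ v ∈ supp, (∑ u : V, pay u v)) = (∑ v : V, (∑ u : V, pay u v)) := by
      apply Finset.sum_subset (Finset.subset_univ _)
      intro v _ hvn
      apply Finset.sum_eq_zero
      intro u _
      apply hpay_adj
      intro hadj
      exact hvn ((hmem_supp v).2 (hadj_supp hadj))
    have e2 : (∑ v ∈ supp, (∑ u : V, pay v u)) = (∑ v : V, (∑ u : V, pay v u)) := by
      apply Finset.sum_subset (Finset.subset_univ _)
      intro v _ hvn
      apply Finset.sum_eq_zero
      intro u _
      apply hpay_adj
      intro hadj
      exact hvn ((hmem_supp v).2 (hadj_supp hadj.symm))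
    rw [e1, e2]
    exact Finset.sum_comm
  have hge : (0:ℝ) ≤ ∑ v ∈ supp, ((H.degree v : ℝ) - k) := by
    have h1 := Finset.sum_nonneg hfinal
    have h2 : (∑ v ∈ supp, (((H.degree v : ℝ) - k + (∑ u : V, pay u v)) - (∑ u : V, pay v u)))
        = (∑ v ∈ supp, ((H.degree v : ℝ) - k))
          + ((∑ v ∈ supp, (∑ u : V, pay u v)) - (∑ v ∈ supp, (∑ u : V, pay v u))) := by
      rw [Finset.sum_sub_distrib, Finset.sum_add_distrib]
      ring
    rw [h2, hswap] at h1
    linarith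
  have hdeg_eq : (∑ v ∈ supp, (H.degree v : ℝ)) = (∑ v : V, (H.degree v : ℝ)) := by
    apply Finset.sum_subset (Finset.subset_univ _)
    intro v _ hvn
    have : ¬ 0 < H.degree v := fun hc => hvn ((hmem_supp v).2 hc)
    have : H.degree v = 0 := by omega
    rw [this]
    norm_num
  rw [Finset.sum_sub_distrib, Finset.sum_const, hdeg_eq, nsmul_eq_mul] at hge
  linarith

lemma degree_le_of_le {H G : SimpleGraph V} [DecidableRel H.Adj] [DecidableRel G.Adj]
    (hHG : H ≤ G) (v : V) : H.degree v ≤ G.degree v := by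
  apply Finset.card_le_card
  intro u hu
  rw [SimpleGraph.mem_neighborFinset] at *
  exact hHG hu

lemma palette_set_eq (H : SimpleGraph V) [DecidableRel H.Adj] {n : ℕ} (φ : V → V → Fin n)
    (v : V) : {c : Fin n | ∃ u : V, H.Adj u v ∧ φ u v = c} = ↑(Palette H φ v) := by
  ext c
  simp only [Set.mem_setOf_eq, Finset.coe_image, Set.mem_image, Finset.mem_coe, Palette,
    SimpleGraph.mem_neighborFinset]
  constructor
  · rintro ⟨u, hu, rfl⟩
    exact ⟨u, hu.symm, rfl⟩
  · rintro ⟨u, hu, rfl⟩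
    exact ⟨u, hu.symm, rfl⟩

lemma good_edgeless (H : SimpleGraph V) [DecidableRel H.Adj] {n ℓ : ℕ} (hn1 : 0 < n)
    (hE : ∀ v, H.degree v = 0) :
    ∃ φ : V → V → Fin n, IsIncidenceColoring H φ ∧ ∀ v, (Palette H φ v).card ≤ ℓ := by
  refine ⟨fun _ _ => ⟨0, hn1⟩, ?_, ?_⟩
  · intro v u w x hvu _ _ _
    exfalso
    have h1 : u ∈ H.neighborFinset v := (H.mem_neighborFinset v u).2 hvu
    have h2 := Finset.card_pos.2 ⟨u, h1⟩
    have h3 := hE v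
    rw [SimpleGraph.degree] at h3
    omega
  · intro v
    have h3 := hE v
    rw [SimpleGraph.degree, Finset.card_eq_zero] at h3
    rw [Palette, h3, Finset.image_empty, Finset.card_empty]
    omega

lemma mad_bound (G : SimpleGraph V) (k : ℝ) (hmad : MadLT G k)
    (H : SimpleGraph V) [DecidableRel H.Adj] (hHG : H ≤ G)
    (hne : ∃ v, 0 < H.degree v) :
    (∑ v : V, (H.degree v : ℝ)) <
      k * ((Finset.univ.filter (fun v => 0 < H.degree v)).card : ℝ) := by
  classical
  obtain ⟨v₀, hv₀⟩ := hne
  set supp := Finset.univ.filter (fun v => 0 < H.degree v) with hsupp_def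
  have hdeg_adj : ∀ {a b : V}, H.Adj a b → 0 < H.degree a := by
    intro a b h
    have : b ∈ H.neighborFinset a := (H.mem_neighborFinset a b).2 h
    exact Finset.card_pos.2 ⟨b, this⟩
  let HS : G.Subgraph :=
    { verts := ↑supp
      Adj := H.Adj
      adj_sub := fun h => hHG h
      edge_vert := by
        intro a b h
        simp only [hsupp_def, Finset.coe_filter, Set.mem_setOf_eq, Finset.mem_univ, true_and]
        exact hdeg_adj h
      symm := H.symm }
  have h1 := hmad HS ⟨v₀, by
    simp only [HS, hsupp_def, Finset.coe_filter, Set.mem_setOf_eq, Finset.mem_univ, true_and]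
    exact hv₀⟩
  have h2 : HS.verts.ncard = supp.card := Set.ncard_coe_finset supp
  have h3 : HS.edgeSet = H.edgeSet := by
    ext e
    induction e with
    | _ a b =>
      rw [SimpleGraph.Subgraph.mem_edgeSet, SimpleGraph.mem_edgeSet]
  have h4 : H.edgeSet.ncard = H.edgeFinset.card := by
    rw [← SimpleGraph.coe_edgeFinset, Set.ncard_coe_finset]
  have h5 : ∑ v : V, H.degree v = 2 * H.edgeFinset.card :=
    SimpleGraph.sum_degrees_eq_twice_card_edges H
  have h6 : (∑ v : V, (H.degree v : ℝ)) = ((∑ v : V, H.degree v : ℕ) : ℝ) := by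
    push_cast
    rfl
  rw [h3, h4, h2] at h1
  rw [h6, h5]
  push_cast
  push_cast at h1
  linarith

lemma ncard_edge (H : SimpleGraph V) [DecidableRel H.Adj] :
    H.edgeSet.ncard = H.edgeFinset.card := by
  rw [← SimpleGraph.coe_edgeFinset, Set.ncard_coe_finset]

/-- The main induction. -/
lemma exists_good (G : SimpleGraph V) [DecidableRel G.Adj] (k Δ ℓ n : ℕ)
    (α : ℝ) (hα : 0 < α) (hn : n = Δ + ℓ) (hn1 : 0 < n)
    (hk1 : 1 ≤ k) (hlk : k ≤ ℓ + 1)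
    (hτα : α * (k : ℝ) < (ℓ : ℝ) + 2 - (k : ℝ))
    (hΔα : ((3 * α + 1) / (2 * α)) * (k : ℝ) - 2 ≤ (Δ : ℝ))
    (hmad : MadLT G (k : ℝ))
    (hΔG : ∀ v, G.degree v ≤ Δ) :
    ∀ m : ℕ, ∀ H : SimpleGraph V, ∀ _inst : DecidableRel H.Adj, H ≤ G →
      H.edgeSet.ncard ≤ m →
      ∃ φ : V → V → Fin n, IsIncidenceColoring H φ ∧
        ∀ v : V, (Palette H φ v).card ≤ ℓ := by
  intro m
  induction m with
  | zero =>
    intro H _inst hHG hcard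
    apply good_edgeless H hn1
    intro v
    by_contra hc
    have hv : 0 < H.degree v := by omega
    obtain ⟨u, hu⟩ := Finset.card_pos.1 hv
    have hadj : H.Adj v u := (H.mem_neighborFinset v u).1 hu
    have he : s(v, u) ∈ H.edgeFinset := SimpleGraph.mem_edgeFinset.2 hadj
    have : 0 < H.edgeFinset.card := Finset.card_pos.2 ⟨_, he⟩
    rw [ncard_edge H] at hcard
    omega
  | succ m ih =>
    intro H _inst hHG hcard
    by_cases hE : ∃ v, 0 < H.degree v
    · -- find a reducible vertex
      have hdeg : ∀ v, H.degree v ≤ Δ := fun v =>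
        le_trans (degree_le_of_le hHG v) (hΔG v)
      have hsum := mad_bound G (k : ℝ) hmad H hHG hE
      obtain ⟨z, hz1, hzℓ, hzred⟩ :=
        exists_reducible H k Δ ℓ α hα hk1 hlk hτα hΔα hdeg hsum
      -- delete the edges at z
      set H' : SimpleGraph V := H.deleteEdges {e : Sym2 V | z ∈ e} with hH'_def
      letI : DecidableRel H'.Adj := Classical.decRel _
      have hH'c : ∀ a b : V, H'.Adj a b ↔ H.Adj a b ∧ a ≠ z ∧ b ≠ z := by
        intro a b
        rw [hH'_def, SimpleGraph.deleteEdges_adj]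
        simp only [Set.mem_setOf_eq, Sym2.mem_iff]
        constructor
        · rintro ⟨h1, h2⟩
          push_neg at h2
          exact ⟨h1, fun h => h2.1 h.symm, fun h => h2.2 h.symm⟩
        · rintro ⟨h1, h2, h3⟩
          refine ⟨h1, ?_⟩
          push_neg
          exact ⟨fun h => h2 h.symm, fun h => h3 h.symm⟩
      have hH'G : H' ≤ G := le_trans (SimpleGraph.deleteEdges_le _) hHG
      have hH'card : H'.edgeSet.ncard ≤ m := by
        obtain ⟨u₀, hu₀⟩ := Finset.card_pos.1 hz1
        have hadj₀ : H.Adj z u₀ := (H.mem_neighborFinset z u₀).1 hu₀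
        have hss : H'.edgeFinset ⊂ H.edgeFinset := by
          constructor
          · rw [← Finset.coe_subset, SimpleGraph.coe_edgeFinset, SimpleGraph.coe_edgeFinset]
            exact SimpleGraph.edgeSet_mono (SimpleGraph.deleteEdges_le _)
          · intro hsub
            have h7 : s(z, u₀) ∈ H.edgeFinset := SimpleGraph.mem_edgeFinset.2 hadj₀
            have h8 := hsub h7
            rw [SimpleGraph.mem_edgeFinset] at h8
            have h9 : H'.Adj z u₀ := h8
            rw [hH'c] at h9
            exact h9.2.1 rfl
        have h10 := Finset.card_lt_card hss
        rw [ncard_edge H'] at *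
        rw [ncard_edge H] at hcard
        omega
      obtain ⟨φ, hφ, hpal⟩ := ih H' (Classical.decRel _) hH'G hH'card
      exact extend H hn hdeg z hz1 hzℓ hzred H' hH'c φ hφ hpal
    · push_neg at hE
      apply good_edgeless H hn1
      intro v
      have := hE v
      omega
end IncAux

theorem incidence_coloring_mad_lt_k_alpha {V : Type*} [Fintype V] (G : SimpleGraph V)
    [DecidableRel G.Adj] (k : ℕ) (hk : 0 < k) (α : ℝ) (hα : 0 < α)
    (hmad : MadLT G (k : ℝ))
    (hΔ : ((G.maxDegree : ℝ)) ≥ ((3 * α + 1) / (2 * α)) * (k : ℝ) - 2) :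
    HasIncidenceColoring G (G.maxDegree + ⌊(1 + α) * (k : ℝ)⌋₊ - 1)
      (⌊(1 + α) * (k : ℝ)⌋₊ - 1) := by
  classical
  set Δ := G.maxDegree with hΔ_def
  set L := ⌊(1 + α) * (k : ℝ)⌋₊ with hL_def
  have hk0 : (0:ℝ) < (k:ℝ) := by exact_mod_cast hk
  have hk1' : (1:ℝ) ≤ (k:ℝ) := by exact_mod_cast hk
  have hL1 : 1 ≤ L := by
    rw [hL_def]
    apply Nat.le_floor
    push_cast
    nlinarith [mul_pos hα hk0]
  have hLk : k ≤ L := by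
    rw [hL_def]
    apply Nat.le_floor
    nlinarith [mul_pos hα hk0]
  have hLup : (1 + α) * (k : ℝ) < (L : ℝ) + 1 := Nat.lt_floor_add_one _
  set ℓ := L - 1 with hℓ_def
  have hℓL : ℓ + 1 = L := by omega
  set n := Δ + L - 1 with hn_def
  have hn : n = Δ + ℓ := by omega
  have hℓℝ : (ℓ : ℝ) = (L : ℝ) - 1 := by
    have h := hℓL
    have h2 : ((ℓ:ℕ):ℝ) + 1 = (L : ℝ) := by exact_mod_cast h
    linarith
  have hτα : α * (k : ℝ) < (ℓ : ℝ) + 2 - (k : ℝ) := by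
    rw [hℓℝ]
    have hkL : (k : ℝ) ≤ (1 + α) * (k : ℝ) := by nlinarith
    linarith
  have hn1 : 0 < n := by
    rcases Nat.eq_zero_or_pos Δ with hΔ0 | hΔpos
    · -- then α ≥ 1, so L ≥ 2
      have hα1 : (1:ℝ) ≤ α := by
        rw [hΔ0] at hΔ
        push_cast at hΔ
        -- 0 ≥ (3α+1)/(2α) * k − 2
        have h1 : ((3 * α + 1) / (2 * α)) * (k : ℝ) ≤ 2 := by linarith
        have h2 : (3 * α + 1) * (k : ℝ) ≤ 2 * (2 * α) := by
          have h3 := mul_le_mul_of_nonneg_left h1 (le_of_lt (by linarith : (0:ℝ) < 2 * α))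
          calc (3 * α + 1) * (k:ℝ) = 2 * α * (((3 * α + 1) / (2 * α)) * (k : ℝ)) := by
                field_simp
          _ ≤ 2 * α * 2 := h3
          _ = 2 * (2 * α) := by ring
        have hk1' : (1:ℝ) ≤ (k:ℝ) := by exact_mod_cast hk
        nlinarith
      have hL2 : 2 ≤ L := by
        rw [hL_def]
        apply Nat.le_floor
        push_cast
        have hk1' : (1:ℝ) ≤ (k:ℝ) := by exact_mod_cast hk
        nlinarith
      omega
    · omega
  have hlk : k ≤ ℓ + 1 := by omega
  obtain ⟨φ, hφ, hpal⟩ := IncAux.exists_good G k Δ ℓ n α hα hn hn1 hk hlk hτα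
    (by rw [hΔ_def]; linarith) hmad (fun v => G.degree_le_maxDegree v)
    (G.edgeSet.ncard) G (by infer_instance) le_rfl le_rfl
  refine ⟨φ, hφ, ?_⟩
  intro v
  rw [IncAux.palette_set_eq G φ v, Set.ncard_coe_finset]
  exact hpal v
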